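/- Let Q = [[0, -ζ², -1], [-ζ², 0, -ζ], [0, 0, ζ²]] ∈ M₃(ℂ). Then Q·v₁ is a nonzero scalar multiple of v₁, Q·v₂ is a nonzero scalar multiple of v₄, Q·v₇ is a nonzero scalar multiple of v₃, and Q·v₈ is a nonzero scalar multiple of v₆ (so Q realizes the unique projective transformation sending the frame (v₁,v₂,v₇,v₈) to (v₁,v₄,v₃,v₆)); however, Q·v₃ is not a scalar multiple of any of v₁, …, v₉. In particular Q does not preserve the nine-point configuration, so the coordinate-swap of 𝔽₃² (an element of GL(2,𝔽₃) of determinant −1) is not induced by any element of PGL₃(ℂ) preserving the configuration. -/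

import Mathlib

open Matrix

noncomputable def ζ : ℂ := Complex.exp (2 * Real.pi * Complex.I / 3)

/-- The nine column vectors of the rank-one block of the decomposition. -/
noncomputable def v : Fin 9 → (Fin 3 → ℂ) :=
  ![![1, -1, 0],
    ![0, 1, -ζ^2],
    ![1, 0, -ζ^2],
    ![0, 1, -ζ],
    ![1, 0, -1],
    ![1, -ζ^2, 0],
    ![1, 0, -ζ],
    ![1, -ζ, 0],
    ![0, 1, -1]]

/-- The matrix realizing the unique projective transformation sending the frame
(v₁,v₂,v₇,v₈) to (v₁,v₄,v₃,v₆). -/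
noncomputable def Q : Matrix (Fin 3) (Fin 3) ℂ :=
  !![0, -ζ^2, -1; -ζ^2, 0, -ζ; 0, 0, ζ^2]

lemma hprim : IsPrimitiveRoot ζ 3 := by
  have h := Complex.isPrimitiveRoot_exp 3 (by norm_num)
  unfold ζ
  convert h using 3
  norm_num

lemma hζ3 : ζ ^ 3 = 1 := hprim.pow_eq_one
lemma hζ0 : ζ ≠ 0 := hprim.ne_zero (by norm_num)
lemma hζ21 : ζ ^ 2 ≠ 1 := by
  intro h
  have h3 := hζ3
  rw [show (3:ℕ) = 2+1 from rfl, pow_succ, h, one_mul] at h3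
  exact hprim.ne_one (by norm_num) h3

lemma hv0 : v 0 = ![1, -1, 0] := rfl
lemma hv1 : v 1 = ![0, 1, -ζ^2] := rfl
lemma hv2 : v 2 = ![1, 0, -ζ^2] := rfl
lemma hv3 : v 3 = ![0, 1, -ζ] := rfl
lemma hv4 : v 4 = ![1, 0, -1] := rfl
lemma hv5 : v 5 = ![1, -ζ^2, 0] := rfl
lemma hv6 : v 6 = ![1, 0, -ζ] := rfl
lemma hv7 : v 7 = ![1, -ζ, 0] := rfl
lemma hv8 : v 8 = ![0, 1, -1] := rfl

/-- Q sends v₁,v₂,v₇,v₈ to nonzero multiples of v₁,v₄,v₃,v₆ respectively, but Q·v₃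
is not a scalar multiple of any of the nine vectors: the coordinate swap of 𝔽₃² is
not induced by any element of PGL₃(ℂ) preserving the configuration. -/
theorem coordinate_swap_not_induced :
    (∃ c : ℂ, c ≠ 0 ∧ Q.mulVec (v 0) = c • v 0) ∧
    (∃ c : ℂ, c ≠ 0 ∧ Q.mulVec (v 1) = c • v 3) ∧
    (∃ c : ℂ, c ≠ 0 ∧ Q.mulVec (v 6) = c • v 2) ∧
    (∃ c : ℂ, c ≠ 0 ∧ Q.mulVec (v 7) = c • v 5) ∧
    (∀ (i : Fin 9) (c : ℂ), Q.mulVec (v 2) ≠ c • v i) := by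
  have h3 := hζ3
  have h0 := hζ0
  have h21 := hζ21
  refine ⟨⟨ζ^2, pow_ne_zero 2 h0, ?_⟩, ⟨1, one_ne_zero, ?_⟩, ⟨ζ, h0, ?_⟩,
    ⟨1, one_ne_zero, ?_⟩, ?_⟩
  · funext j; fin_cases j <;>
      simp [Q, hv0, mulVec, dotProduct, Fin.sum_univ_three] <;> ring
  · funext j; fin_cases j <;>
      simp [Q, hv1, hv3, mulVec, dotProduct, Fin.sum_univ_three] <;>
      first
        | ring1
        | linear_combination h3
        | linear_combination -h3
        | linear_combination ζ * h3
        | linear_combination -ζ * h3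
        | linear_combination ζ^2 * h3
        | linear_combination (ζ - 1) * h3
        | linear_combination 2 * h3
  · funext j; fin_cases j <;>
      simp [Q, hv6, hv2, mulVec, dotProduct, Fin.sum_univ_three] <;>
      first
        | ring1
        | linear_combination h3
        | linear_combination -h3
        | linear_combination ζ * h3
        | linear_combination -ζ * h3
        | linear_combination ζ^2 * h3
        | linear_combination (ζ - 1) * h3
        | linear_combination 2 * h3
  · funext j; fin_cases j <;>
      simp [Q, hv7, hv5, mulVec, dotProduct, Fin.sum_univ_three] <;>
      first
        | ring1
        | linear_combination h3
        | linear_combination -h3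
        | linear_combination ζ * h3
        | linear_combination -ζ * h3
        | linear_combination ζ^2 * h3
        | linear_combination (ζ - 1) * h3
        | linear_combination 2 * h3
  · intro i c h
    have h1 := congrFun h 0
    have h2 := congrFun h 1
    have hthird := congrFun h 2
    fin_cases i <;>
      simp [Q, hv0, hv1, hv2, hv3, hv4, hv5, hv6, hv7, hv8, mulVec, dotProduct,
        Fin.sum_univ_three] at h1 h2 hthird <;>
      first
        | exact h0 h1
        | exact h0 hthird
        | exact h21 (by linear_combination h3 - h2)
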